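/- Consider a variable-length block code with P(τ < ∞) = 1 on a DMC with minimum transition probability λ > 0, with average error probability P_e and message set M satisfying P_e + 1/|M| < 1. Then the minimum over messages m of the conditional error probability P(M̂ ≠ m | M = m) is strictly positive; specifically, letting n* := min{n : max_m P(τ > n | M = m) ≤ (|M|−1)/|M| − P_e} (which is finite), one has min_m P(M̂ ≠ m | M = m) ≥ (λ/(1−λ))^{n*} · (1 − 1/|M| − P_e). -/
import Mathlib


open scoped BigOperators

noncomputable section

/-- Likelihood of an output history (stored in reverse chronological order: head is the most
recent output) given the message `m`, for a variable-length feedback code with encoder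
`enc` (mapping the message and the past outputs to the next channel input) over the
channel `W`. -/
def lik {X Y Msg : Type*} (W : X → Y → ℝ) (enc : Msg → List Y → X) (m : Msg) :
    List Y → ℝ
  | [] => 1
  | y :: ys => lik W enc m ys * W (enc m ys) y

private lemma lik_nonneg {X Y Msg : Type*} (W : X → Y → ℝ) (hW : ∀ x y, 0 ≤ W x y)
    (enc : Msg → List Y → X) (m : Msg) : ∀ ys : List Y, 0 ≤ lik W enc m ys
  | [] => zero_le_one
  | _ :: ys => mul_nonneg (lik_nonneg W hW enc m ys) (hW _ _)

private lemma lik_chg {X Y Msg : Type*} (W : X → Y → ℝ) (r : ℝ) (hr0 : 0 ≤ r)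
    (hW : ∀ x y, 0 ≤ W x y) (hstep : ∀ x x' y, r * W x y ≤ W x' y)
    (enc : Msg → List Y → X) (m m' : Msg) :
    ∀ ys : List Y, r ^ ys.length * lik W enc m ys ≤ lik W enc m' ys
  | [] => by simp [lik]
  | y :: ys => by
      have ih := lik_chg W r hr0 hW hstep enc m m' ys
      have h1 : r ^ (y :: ys).length * lik W enc m (y :: ys)
          = (r ^ ys.length * lik W enc m ys) * (r * W (enc m ys) y) := by
        simp only [lik, List.length_cons, pow_succ]; ring
      rw [h1]
      exact mul_le_mul ih (hstep _ _ _) (mul_nonneg hr0 (hW _ _)) (lik_nonneg W hW enc m' ys)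

private lemma main_aux {Y Msg : Type*} [Fintype Msg] [DecidableEq Msg] [Nonempty Msg]
    {S : Set (List Y)} (dec : List Y → Msg) (g : Msg → ↥S → ℝ) (r : ℝ) (Pe : ℝ)
    (hr0 : 0 ≤ r) (hr1 : r ≤ 1)
    (hg0 : ∀ m ys, 0 ≤ g m ys)
    (hchg : ∀ (m m' : Msg) (ys : ↥S), r ^ (ys : List Y).length * g m ys ≤ g m' ys)
    (hsum1 : ∀ m, ∑' ys : S, g m ys = 1)
    (hPe : Pe = ∑' ys : S, (Fintype.card Msg : ℝ)⁻¹ *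
        ∑ m, (if dec (ys : List Y) = m then 0 else g m ys))
    (hlt : Pe + (Fintype.card Msg : ℝ)⁻¹ < 1) :
    ∃ nstar : ℕ,
      IsLeast {n : ℕ | ∀ m : Msg,
          (1 - ∑' ys : S, (if (ys : List Y).length ≤ n then g m ys else 0)) ≤
            ((Fintype.card Msg : ℝ) - 1) / (Fintype.card Msg : ℝ) - Pe} nstar ∧
      ∀ m : Msg, r ^ nstar * (1 - (Fintype.card Msg : ℝ)⁻¹ - Pe) ≤
          ∑' ys : S, (if dec (ys : List Y) = m then 0 else g m ys) := by
  classical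
  set K : ℝ := (Fintype.card Msg : ℝ) with hK
  have hKpos : (0:ℝ) < K := by
    rw [hK]
    exact_mod_cast Fintype.card_pos
  have hgsum : ∀ m, Summable (g m) := by
    intro m
    by_contra h
    exact zero_ne_one ((tsum_eq_zero_of_not_summable h).symm.trans (hsum1 m))
  have he0 : ∀ m (ys : ↥S), 0 ≤ (if dec (ys : List Y) = m then 0 else g m ys) := by
    intro m ys; by_cases h : dec (ys : List Y) = m <;> simp [h, hg0 m ys]
  have he_le : ∀ m (ys : ↥S), (if dec (ys : List Y) = m then 0 else g m ys) ≤ g m ys := by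
    intro m ys; by_cases h : dec (ys : List Y) = m <;> simp [h, hg0 m ys]
  have hesum : ∀ m, Summable (fun ys : ↥S => if dec (ys : List Y) = m then 0 else g m ys) :=
    fun m => Summable.of_nonneg_of_le (he0 m) (he_le m) (hgsum m)
  have hq0 : ∀ m n (ys : ↥S), 0 ≤ (if (ys : List Y).length ≤ n then g m ys else 0) := by
    intro m n ys; by_cases h : (ys : List Y).length ≤ n <;> simp [h, hg0 m ys]
  have hqsum : ∀ m n, Summable (fun ys : ↥S => if (ys : List Y).length ≤ n then g m ys else 0) := by
    intro m n
    refine Summable.of_nonneg_of_le (hq0 m n) (fun ys => ?_) (hgsum m)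
    by_cases h : (ys : List Y).length ≤ n <;> simp [h, hg0 m ys]
  have hc0 : ∀ m (ys : ↥S), 0 ≤ (if dec (ys : List Y) = m then g m ys else 0) := by
    intro m ys; by_cases h : dec (ys : List Y) = m <;> simp [h, hg0 m ys]
  have hcsum : ∀ m, Summable (fun ys : ↥S => if dec (ys : List Y) = m then g m ys else 0) := by
    intro m
    refine Summable.of_nonneg_of_le (hc0 m) (fun ys => ?_) (hgsum m)
    by_cases h : dec (ys : List Y) = m <;> simp [h, hg0 m ys]
  have hPe' : Pe = K⁻¹ * ∑ m, ∑' ys : S, (if dec (ys : List Y) = m then 0 else g m ys) := by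
    rw [hPe, tsum_mul_left, Summable.tsum_finsetSum (fun m _ => hesum m)]
  have hKPe : ∑ m, ∑' ys : S, (if dec (ys : List Y) = m then 0 else g m ys) = K * Pe := by
    rw [hPe']; field_simp
  have hcorr : ∀ m, ∑' ys : S, (if dec (ys : List Y) = m then g m ys else 0)
      = 1 - ∑' ys : S, (if dec (ys : List Y) = m then 0 else g m ys) := by
    intro m
    have hpt : ∀ ys : ↥S, (if dec (ys : List Y) = m then g m ys else 0)
        = g m ys - (if dec (ys : List Y) = m then 0 else g m ys) := by
      intro ys; by_cases h : dec (ys : List Y) = m <;> simp [h]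
    rw [tsum_congr hpt, Summable.tsum_sub (hgsum m) (hesum m), hsum1 m]
  have hPem0 : ∀ m, 0 ≤ ∑' ys : S, (if dec (ys : List Y) = m then 0 else g m ys) :=
    fun m => tsum_nonneg (he0 m)
  have hthr : (K - 1) / K - Pe = 1 - K⁻¹ - Pe := by
    field_simp
  -- nonemptiness of the set
  have hA : ∃ n : ℕ, ∀ m : Msg,
      (1 - ∑' ys : S, (if (ys : List Y).length ≤ n then g m ys else 0)) ≤ (K - 1) / K - Pe := by
    have ht0 : 0 < 1 - K⁻¹ - Pe := by linarith
    have hex : ∀ m : Msg, ∃ F : Finset ↥S, 1 - (1 - K⁻¹ - Pe) < ∑ ys ∈ F, g m ys := by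
      intro m
      have h1 : (1:ℝ) - (1 - K⁻¹ - Pe) < 1 := by linarith
      have h2 : HasSum (g m) 1 := by
        have := (hgsum m).hasSum
        rwa [hsum1 m] at this
      exact (h2.eventually (eventually_gt_nhds h1)).exists
    choose F hF using hex
    set n0 := Finset.univ.sup (fun m => (F m).sup (fun ys : ↥S => (ys : List Y).length)) with hn0
    refine ⟨n0, fun m => ?_⟩
    have hlen : ∀ ys ∈ F m, (ys : List Y).length ≤ n0 := fun ys hys =>
      le_trans (Finset.le_sup (f := fun ys : ↥S => (ys : List Y).length) hys) (Finset.le_sup (f := fun m => (F m).sup (fun ys : ↥S => (ys : List Y).length)) (Finset.mem_univ m))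
    have h2 : ∑ ys ∈ F m, g m ys ≤ ∑' ys : S, (if (ys : List Y).length ≤ n0 then g m ys else 0) := by
      calc ∑ ys ∈ F m, g m ys
          = ∑ ys ∈ F m, (if (ys : List Y).length ≤ n0 then g m ys else 0) :=
            Finset.sum_congr rfl (fun ys hys => (if_pos (hlen ys hys)).symm)
        _ ≤ _ := Summable.sum_le_tsum (F m) (fun ys _ => hq0 m n0 ys) (hqsum m n0)
    have h3 := hF m
    linarith
  refine ⟨Nat.find hA, ⟨Nat.find_spec hA, fun n hn => Nat.find_min' hA hn⟩, ?_⟩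
  set nstar := Nat.find hA with hns_def
  have hns : ∀ m, (1 - ∑' ys : S, (if (ys : List Y).length ≤ nstar then g m ys else 0))
      ≤ 1 - K⁻¹ - Pe := by
    intro m
    have h := Nat.find_spec hA m
    linarith
  intro m
  -- summability of the "u" functions
  have hu0 : ∀ m' (ys : ↥S),
      0 ≤ (if ((ys : List Y).length ≤ nstar ∧ dec (ys : List Y) = m') then g m' ys else 0) := by
    intro m' ys
    by_cases h : ((ys : List Y).length ≤ nstar ∧ dec (ys : List Y) = m') <;> simp [h, hg0 m' ys]
  have husum : ∀ m', Summable (fun ys : ↥S =>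
      if ((ys : List Y).length ≤ nstar ∧ dec (ys : List Y) = m') then g m' ys else 0) := by
    intro m'
    refine Summable.of_nonneg_of_le (hu0 m') (fun ys => ?_) (hgsum m')
    by_cases h : ((ys : List Y).length ≤ nstar ∧ dec (ys : List Y) = m') <;> simp [h, hg0 m' ys]
  -- pointwise step A
  have hptA : ∀ ys : ↥S,
      r ^ nstar * ∑ m' ∈ Finset.univ.erase m,
          (if ((ys : List Y).length ≤ nstar ∧ dec (ys : List Y) = m') then g m' ys else 0)
        ≤ (if dec (ys : List Y) = m then 0 else g m ys) := by
    intro ys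
    by_cases hlen : (ys : List Y).length ≤ nstar
    · have hsum_eq : ∑ m' ∈ Finset.univ.erase m,
          (if ((ys : List Y).length ≤ nstar ∧ dec (ys : List Y) = m') then g m' ys else 0)
          = if dec (ys : List Y) ∈ Finset.univ.erase m then g (dec (ys : List Y)) ys else 0 := by
        rw [← Finset.sum_ite_eq (Finset.univ.erase m) (dec (ys : List Y)) (fun m' => g m' ys)]
        exact Finset.sum_congr rfl fun m' _ => by simp [hlen]
      rw [hsum_eq]
      by_cases hd : dec (ys : List Y) = m
      · simp [hd]
      · rw [if_pos (Finset.mem_erase.mpr ⟨hd, Finset.mem_univ _⟩), if_neg hd]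
        calc r ^ nstar * g (dec (ys : List Y)) ys
            ≤ r ^ (ys : List Y).length * g (dec (ys : List Y)) ys :=
              mul_le_mul_of_nonneg_right (pow_le_pow_of_le_one hr0 hr1 hlen) (hg0 _ _)
          _ ≤ g m ys := hchg _ m ys
    · have hz : ∀ m' ∈ Finset.univ.erase m,
          (if ((ys : List Y).length ≤ nstar ∧ dec (ys : List Y) = m') then g m' ys else 0) = 0 :=
        fun m' _ => if_neg (fun h => hlen h.1)
      rw [Finset.sum_eq_zero hz, mul_zero]
      exact he0 m ys
  -- step B
  have hBsum : Summable (fun ys : ↥S => r ^ nstar * ∑ m' ∈ Finset.univ.erase m,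
      (if ((ys : List Y).length ≤ nstar ∧ dec (ys : List Y) = m') then g m' ys else 0)) :=
    (summable_sum (fun m' _ => husum m')).mul_left _
  have hB : r ^ nstar * ∑ m' ∈ Finset.univ.erase m, ∑' ys : S,
      (if ((ys : List Y).length ≤ nstar ∧ dec (ys : List Y) = m') then g m' ys else 0)
      ≤ ∑' ys : S, (if dec (ys : List Y) = m then 0 else g m ys) := by
    rw [← Summable.tsum_finsetSum (fun m' _ => husum m'), ← tsum_mul_left]
    exact Summable.tsum_le_tsum hptA hBsum (hesum m)
  -- step C : per-message lower bound on the u-mass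
  have hC : ∀ m', (1 - ∑' ys : S, (if dec (ys : List Y) = m' then 0 else g m' ys))
      - (1 - ∑' ys : S, (if (ys : List Y).length ≤ nstar then g m' ys else 0))
      ≤ ∑' ys : S, (if ((ys : List Y).length ≤ nstar ∧ dec (ys : List Y) = m') then g m' ys else 0) := by
    intro m'
    have hpt : ∀ ys : ↥S,
        (if dec (ys : List Y) = m' then g m' ys else 0)
          + (if (ys : List Y).length ≤ nstar then g m' ys else 0) - g m' ys
        ≤ (if ((ys : List Y).length ≤ nstar ∧ dec (ys : List Y) = m') then g m' ys else 0) := by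
      intro ys
      by_cases h1 : dec (ys : List Y) = m' <;> by_cases h2 : (ys : List Y).length ≤ nstar <;>
        simp [h1, h2, hg0 m' ys]
    have hsl : Summable (fun ys : ↥S =>
        (if dec (ys : List Y) = m' then g m' ys else 0)
          + (if (ys : List Y).length ≤ nstar then g m' ys else 0) - g m' ys) :=
      ((hcsum m').add (hqsum m' nstar)).sub (hgsum m')
    have h4 := Summable.tsum_le_tsum hpt hsl (husum m')
    rw [Summable.tsum_sub ((hcsum m').add (hqsum m' nstar)) (hgsum m'),
        Summable.tsum_add (hcsum m') (hqsum m' nstar), hcorr m', hsum1 m'] at h4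
    linarith
  -- combine over m' ≠ m
  have hcard : ((Finset.univ.erase m).card : ℝ) = K - 1 := by
    rw [Finset.card_erase_of_mem (Finset.mem_univ m), Finset.card_univ]
    have h1 : 1 ≤ Fintype.card Msg := Fintype.card_pos
    rw [Nat.cast_sub h1, Nat.cast_one]
  have hD : ∑ m' ∈ Finset.univ.erase m, ((1 - (1 - K⁻¹ - Pe))
        - ∑' ys : S, (if dec (ys : List Y) = m' then 0 else g m' ys))
      ≤ ∑ m' ∈ Finset.univ.erase m, ∑' ys : S,
        (if ((ys : List Y).length ≤ nstar ∧ dec (ys : List Y) = m') then g m' ys else 0) := by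
    refine Finset.sum_le_sum (fun m' _ => ?_)
    have h5 := hC m'
    have h6 := hns m'
    linarith
  have hE : ∑ m' ∈ Finset.univ.erase m, ((1 - (1 - K⁻¹ - Pe))
        - ∑' ys : S, (if dec (ys : List Y) = m' then 0 else g m' ys))
      = (K - 1) * (1 - (1 - K⁻¹ - Pe))
        - (K * Pe - ∑' ys : S, (if dec (ys : List Y) = m then 0 else g m ys)) := by
    rw [Finset.sum_sub_distrib, Finset.sum_const, nsmul_eq_mul, hcard,
        Finset.sum_erase_eq_sub (Finset.mem_univ m), hKPe]
  have halg : (K - 1) * (1 - (1 - K⁻¹ - Pe)) - K * Pe = 1 - K⁻¹ - Pe := by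
    field_simp
    ring
  have hfinal : 1 - K⁻¹ - Pe ≤ ∑ m' ∈ Finset.univ.erase m, ∑' ys : S,
      (if ((ys : List Y).length ≤ nstar ∧ dec (ys : List Y) = m') then g m' ys else 0) := by
    have := hPem0 m
    rw [hE] at hD
    linarith
  calc r ^ nstar * (1 - K⁻¹ - Pe)
      ≤ r ^ nstar * ∑ m' ∈ Finset.univ.erase m, ∑' ys : S,
          (if ((ys : List Y).length ≤ nstar ∧ dec (ys : List Y) = m') then g m' ys else 0) :=
        mul_le_mul_of_nonneg_left hfinal (pow_nonneg hr0 _)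
    _ ≤ _ := hB


/-- If `P_e + 1/|M| < 1`, the minimum conditional error probability is strictly positive:
letting `n*` be the least `n` such that `P(τ > n | M = m) ≤ (|M|-1)/|M| - P_e` for every
message `m` (such an `n` exists, i.e. `n*` is finite), every message `m` satisfies
`P(M̂ ≠ m | M = m) ≥ (λ/(1-λ))^{n*} ⬝ (1 - 1/|M| - P_e)`. -/
theorem min_conditional_error_pos {X Y Msg : Type*} [Fintype X] [Fintype Y] [Fintype Msg]
    [DecidableEq Msg]
    (W : X → Y → ℝ) (lam : ℝ) (hlam : 0 < lam)
    (hlow : ∀ x y, lam ≤ W x y) (hmin : ∃ x y, W x y = lam)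
    (hrow : ∀ x, ∑ y, W x y = 1)
    (enc : Msg → List Y → X) (S : Set (List Y)) (dec : List Y → Msg)
    (hanti : ∀ ys ∈ S, ∀ zs ∈ S, ys <:+ zs → ys = zs)
    (hstopm : ∀ m : Msg, ∑' ys : S, lik W enc m (ys : List Y) = 1) :
    let Pe : ℝ := ∑' ys : S, (Fintype.card Msg : ℝ)⁻¹ *
        ∑ m, (if dec (ys : List Y) = m then 0 else lik W enc m (ys : List Y))
    let Pem : Msg → ℝ := fun m => ∑' ys : S,
        (if dec (ys : List Y) = m then 0 else lik W enc m (ys : List Y))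
    let Ptail : Msg → ℕ → ℝ := fun m n => 1 - ∑' ys : S,
        (if (ys : List Y).length ≤ n then lik W enc m (ys : List Y) else 0)
    Pe + (Fintype.card Msg : ℝ)⁻¹ < 1 →
      ∃ nstar : ℕ,
        IsLeast {n : ℕ | ∀ m : Msg,
            Ptail m n ≤ ((Fintype.card Msg : ℝ) - 1) / (Fintype.card Msg : ℝ) - Pe} nstar ∧
        ∀ m : Msg,
          (lam / (1 - lam)) ^ nstar * (1 - (Fintype.card Msg : ℝ)⁻¹ - Pe) ≤ Pem m := by
  intro Pe Pem Ptail hlt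
  classical
  rcases isEmpty_or_nonempty Msg with hE | hNE
  · exact ⟨0, ⟨fun m => isEmptyElim m, fun n _ => Nat.zero_le n⟩, fun m => isEmptyElim m⟩
  · have hW0 : ∀ x y, 0 ≤ W x y := fun x y => le_trans hlam.le (hlow x y)
    have hlam1 : lam ≤ 1 := by
      obtain ⟨x₀, y₀, h₀⟩ := hmin
      calc lam = W x₀ y₀ := h₀.symm
        _ ≤ ∑ y, W x₀ y := Finset.single_le_sum (fun y _ => hW0 x₀ y) (Finset.mem_univ y₀)
        _ = 1 := hrow x₀
    have hpair : ∀ x y, lam < 1 → W x y + lam ≤ 1 := by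
      intro x y h1
      by_cases hY : ∃ y', y' ≠ y
      · obtain ⟨y', hy'⟩ := hY
        have h2 : W x y + W x y' ≤ ∑ z, W x z := by
          rw [← Finset.sum_pair (Ne.symm hy')]
          exact Finset.sum_le_sum_of_subset_of_nonneg (Finset.subset_univ _)
            (fun i _ _ => hW0 x i)
        have h3 := hrow x
        have h4 := hlow x y'
        linarith
      · push_neg at hY
        obtain ⟨x₀, y₀, h₀⟩ := hmin
        have huniv : (Finset.univ : Finset Y) = {y} := by
          ext z; simp [hY z]
        have h2 : W x₀ y = 1 := by
          have h5 := hrow x₀; rwa [huniv, Finset.sum_singleton] at h5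
        have h6 : lam = 1 := by rw [← h₀, hY y₀, h2]
        linarith
    have hr0 : 0 ≤ lam / (1 - lam) := by
      rcases eq_or_lt_of_le hlam1 with h1 | h1
      · rw [show (1:ℝ) - lam = 0 from by linarith, div_zero]
      · exact div_nonneg hlam.le (by linarith)
    have hstep : ∀ x x' y, lam / (1 - lam) * W x y ≤ W x' y := by
      intro x x' y
      rcases eq_or_lt_of_le hlam1 with h1 | h1
      · rw [show (1:ℝ) - lam = 0 from by linarith, div_zero, zero_mul]
        exact hW0 x' y
      · have hpos : 0 < 1 - lam := by linarith
        have hle : W x y ≤ 1 - lam := by have := hpair x y h1; linarith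
        calc lam / (1 - lam) * W x y ≤ lam / (1 - lam) * (1 - lam) :=
              mul_le_mul_of_nonneg_left hle hr0
          _ = lam := div_mul_cancel₀ lam hpos.ne'
          _ ≤ W x' y := hlow x' y
    have hr1 : lam / (1 - lam) ≤ 1 := by
      rcases eq_or_lt_of_le hlam1 with h1 | h1
      · rw [show (1:ℝ) - lam = 0 from by linarith, div_zero]
        exact zero_le_one
      · obtain ⟨x₀, y₀, h₀⟩ := hmin
        have h2 := hpair x₀ y₀ h1
        rw [h₀] at h2
        rw [div_le_one (by linarith)]
        linarith
    exact main_aux dec (fun m (ys : ↥S) => lik W enc m (ys : List Y)) (lam / (1 - lam)) Pe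
      hr0 hr1 (fun m ys => lik_nonneg W hW0 enc m _)
      (fun m m' ys => lik_chg W (lam / (1 - lam)) hr0 hW0 hstep enc m m' (ys : List Y))
      hstopm rfl hlt

end
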